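/- arXiv:0910.3113 — 2 statements merged into one kernel-verified Lean document; each statement's English description precedes it below -/
import Mathlib

section
/- For every n ≥ 1 and p ∈ {0,1}, the polynomial Z_n + (−1)^p factors completely over ℝ as Z_n + (−1)^p = Π_{k=1}^{n} (X − 4·cos²(πk/(2n+1+(−1)^{k+p}))); in particular all n roots of Z_n + (−1)^p are real and lie in the interval [0, 4). -/
open Polynomial Real

/-- The polynomial sequence `Z`: `Z 0 = 1`, `Z 1 = X - 1`,
`Z n = (X - 2) * Z (n-1) - Z (n-2)` for `n ≥ 2`. -/
noncomputable def Z : ℕ → Polynomial ℝ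
  | 0 => 1
  | 1 => X - 1
  | n + 2 => (X - 2) * Z (n + 1) - Z n

lemma Z_eval : ∀ (n : ℕ) (θ : ℝ),
    (Z n).eval (2 + 2 * Real.cos θ) * Real.sin (θ / 2)
      = Real.sin ((2 * n + 1) * θ / 2)
  | 0, θ => by norm_num [Z]
  | 1, θ => by
      have hs : Real.sin θ = 2 * Real.sin (θ/2) * Real.cos (θ/2) := by
        rw [← Real.sin_two_mul]; ring_nf
      have hc : Real.cos θ = 2 * Real.cos (θ/2)^2 - 1 := by
        rw [← Real.cos_two_mul]; ring_nf
      simp only [Z, eval_sub, eval_X, eval_one]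
      push_cast
      rw [show (2*(1:ℝ)+1)*θ/2 = θ/2 + θ by ring, Real.sin_add]
      linear_combination Real.sin (θ/2) * hc - Real.cos (θ/2) * hs
  | n+2, θ => by
      have h1 := Z_eval (n+1) θ
      have h0 := Z_eval n θ
      have key : Real.sin ((2*((n:ℝ)+2)+1)*θ/2)
          = 2 * Real.cos θ * Real.sin ((2*((n:ℝ)+1)+1)*θ/2)
            - Real.sin ((2*(n:ℝ)+1)*θ/2) := by
        rw [show (2*((n:ℝ)+2)+1)*θ/2 = ((2*((n:ℝ)+1)+1)*θ/2) + θ by ring,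
            show (2*(n:ℝ)+1)*θ/2 = ((2*((n:ℝ)+1)+1)*θ/2) - θ by ring,
            Real.sin_add, Real.sin_sub]
        ring
      show ((X - 2) * Z (n+1) - Z n).eval _ * _ = _
      simp only [eval_sub, eval_mul, eval_X, eval_ofNat]
      push_cast at h1 h0 ⊢
      linear_combination (2 * Real.cos θ) * h1 - h0 - key

lemma Z_monic_deg : ∀ n : ℕ, (Z n).Monic ∧ (Z n).degree = n
  | 0 => by simp [Z, monic_one]
  | 1 => by
      have hx : (X - 1 : ℝ[X]) = X - C 1 := by rw [Polynomial.C_1]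
      refine ⟨?_, ?_⟩
      · rw [show Z 1 = X - 1 from rfl, hx]; exact monic_X_sub_C 1
      · rw [show Z 1 = X - 1 from rfl, hx, degree_X_sub_C]; rfl
  | n+2 => by
      obtain ⟨m1, d1⟩ := Z_monic_deg (n+1)
      obtain ⟨m0, d0⟩ := Z_monic_deg n
      have hx2 : (X - 2 : ℝ[X]) = X - C 2 := by rw [map_ofNat]
      have mX : (X - 2 : ℝ[X]).Monic := by rw [hx2]; exact monic_X_sub_C 2
      have dX : (X - 2 : ℝ[X]).degree = 1 := by rw [hx2]; exact degree_X_sub_C 2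
      have mprod : ((X - 2) * Z (n+1)).Monic := mX.mul m1
      have dprod : ((X - 2) * Z (n+1)).degree = ((n+2 : ℕ) : WithBot ℕ) := by
        rw [degree_mul, dX, d1]
        norm_cast; omega
      have hlt : (Z n).degree < ((X - 2) * Z (n+1)).degree := by
        rw [dprod, d0]
        exact_mod_cast Nat.lt_succ_of_lt (Nat.lt_succ_self n)
      refine ⟨?_, ?_⟩
      · exact mprod.sub_of_left hlt
      · show ((X - 2) * Z (n+1) - Z n).degree = _
        rw [degree_sub_eq_left_of_degree_lt hlt, dprod]


lemma neg_one_pow_cases (m : ℕ) : (-1:ℝ)^m = 1 ∨ (-1:ℝ)^m = -1 := by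
  rcases Nat.even_or_odd m with h | h
  · exact Or.inl h.neg_one_pow
  · exact Or.inr h.neg_one_pow

lemma root_eval (n p k : ℕ) (hn : 1 ≤ n) (hk1 : 1 ≤ k) (hkn : k ≤ n) :
    (Z n).eval (4 * Real.cos (π * k / (2 * n + 1 + (-1 : ℝ) ^ (k + p))) ^ 2)
      = -(-1 : ℝ)^p := by
  set s : ℝ := (-1:ℝ)^(k+p) with hs_def
  set d : ℝ := 2 * n + 1 + s with hd_def
  have hs : s = 1 ∨ s = -1 := neg_one_pow_cases _
  have hd2 : (2*n : ℝ) ≤ d := by rcases hs with h | h <;> rw [hd_def, h] <;> push_cast <;> linarith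
  have hkd : (k : ℝ) < d := by
    have : (k:ℝ) ≤ n := by exact_mod_cast hkn
    have : (1:ℝ) ≤ n := by exact_mod_cast hn
    nlinarith [hd2]
  have hd0 : (0:ℝ) < d := lt_of_le_of_lt (by positivity) hkd
  set α : ℝ := π * k / d with hα_def
  have hα0 : 0 < α := by
    apply div_pos _ hd0
    have : (0:ℝ) < k := by exact_mod_cast hk1
    positivity
  have hαπ : α < π := by
    rw [hα_def, div_lt_iff₀ hd0]
    have : π * k < π * d := by
      apply mul_lt_mul_of_pos_left hkd Real.pi_pos
    linarith
  have hsin : Real.sin α ≠ 0 := ne_of_gt (Real.sin_pos_of_pos_of_lt_pi hα0 hαπ)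
  have hx : 4 * Real.cos α ^ 2 = 2 + 2 * Real.cos (2*α) := by
    rw [Real.cos_two_mul]; ring
  have hZ := Z_eval n (2*α)
  rw [show (2*α)/2 = α by ring, show (2*(n:ℝ)+1)*(2*α)/2 = (2*n+1)*α by ring] at hZ
  have hda : d * α = π * k := by rw [hα_def]; field_simp
  have hrepr : (2*(n:ℝ)+1)*α = k * π - s * α := by
    have : (2*(n:ℝ)+1) = d - s := by rw [hd_def]; ring
    rw [this]; nlinarith [hda]
  have hsin2 : Real.sin ((2*(n:ℝ)+1)*α) = -(-1:ℝ)^p * Real.sin α := by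
    rw [hrepr]
    have hpk : (-1:ℝ)^k * (-1:ℝ)^p = s := by rw [hs_def, ← pow_add]
    have hp2 : ((-1:ℝ)^p)^2 = 1 := by
      rw [← pow_mul, mul_comm, pow_mul, neg_one_sq, one_pow]
    have hck : Real.cos ((k:ℝ)*π) = (-1:ℝ)^k := by
      simpa using Real.cos_nat_mul_pi_sub 0 k
    rcases hs with h | h
    · rw [h] at hpk
      rw [h, one_mul, Real.sin_nat_mul_pi_sub]
      linear_combination (-(Real.sin α)*(-1:ℝ)^p)*hpk + (Real.sin α * (-1:ℝ)^k)*hp2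
    · rw [h] at hpk
      rw [h, show (k:ℝ) * π - (-1) * α = (k:ℝ) * π + α by ring, Real.sin_add,
        Real.sin_nat_mul_pi, hck]
      linear_combination (Real.sin α*(-1:ℝ)^p)*hpk - (Real.sin α*(-1:ℝ)^k)*hp2
  rw [hx]
  exact mul_right_cancel₀ hsin (hZ.trans hsin2)

lemma alpha_half (n p k : ℕ) (hn : 1 ≤ n) (hk1 : 1 ≤ k) (hkn : k ≤ n) :
    0 < π * k / (2 * (n:ℝ) + 1 + (-1:ℝ)^(k+p)) ∧
    π * k / (2 * (n:ℝ) + 1 + (-1:ℝ)^(k+p)) ≤ π/2 := by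
  set s : ℝ := (-1:ℝ)^(k+p) with hs_def
  have hs : s = 1 ∨ s = -1 := neg_one_pow_cases _
  have hd2 : (2*n : ℝ) ≤ 2 * (n:ℝ) + 1 + s := by
    rcases hs with h | h <;> rw [h] <;> linarith
  have hn1 : (1:ℝ) ≤ n := by exact_mod_cast hn
  have hd0 : (0:ℝ) < 2 * (n:ℝ) + 1 + s := by linarith
  have hk0 : (0:ℝ) < k := by exact_mod_cast hk1
  have hkn' : (k:ℝ) ≤ n := by exact_mod_cast hkn
  constructor
  · positivity
  · rw [div_le_iff₀ hd0]
    nlinarith [Real.pi_pos]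

lemma cos_root_nonneg (n p k : ℕ) (hn : 1 ≤ n) (hk1 : 1 ≤ k) (hkn : k ≤ n) :
    0 ≤ Real.cos (π * k / (2 * (n:ℝ) + 1 + (-1:ℝ)^(k+p))) := by
  obtain ⟨h0, h2⟩ := alpha_half n p k hn hk1 hkn
  exact Real.cos_nonneg_of_mem_Icc ⟨by linarith [Real.pi_pos], h2⟩

lemma cos_root_lt_one (n p k : ℕ) (hn : 1 ≤ n) (hk1 : 1 ≤ k) (hkn : k ≤ n) :
    Real.cos (π * k / (2 * (n:ℝ) + 1 + (-1:ℝ)^(k+p))) < 1 := by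
  obtain ⟨h0, h2⟩ := alpha_half n p k hn hk1 hkn
  have hπ := Real.pi_pos
  calc Real.cos (π * k / (2 * (n:ℝ) + 1 + (-1:ℝ)^(k+p))) < Real.cos 0 := by
        apply Real.strictAntiOn_cos ⟨le_refl 0, by linarith⟩
          ⟨by linarith, by linarith⟩ h0
    _ = 1 := Real.cos_zero

lemma root_inj_aux (n : ℕ) (hn : 1 ≤ n) : ∀ a b : ℕ, 1 ≤ a → a ≤ n → 1 ≤ b → b ≤ n →
    a * (2*n) = b * (2*n+2) → False := by
  intro a b ha1 han hb1 hbn h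
  have h' : b * (n+1) = a * n := by zify at h ⊢; linarith
  have hdvd : n ∣ b * (n+1) := ⟨a, by rw [h', Nat.mul_comm]⟩
  have hcop : Nat.Coprime n (n+1) := by simp
  have hnb : n ∣ b := hcop.dvd_of_dvd_mul_right hdvd
  have hbn' : b = n := Nat.le_antisymm hbn (Nat.le_of_dvd (by omega) hnb)
  rw [hbn'] at h'
  have han1 : a * n = (n+1) * n := by zify at h' ⊢; linarith
  have : a = n + 1 := Nat.eq_of_mul_eq_mul_right hn han1
  omega

lemma root_inj (n p : ℕ) (hn : 1 ≤ n) :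
    Set.InjOn (fun k : ℕ => 4 * Real.cos (π * k / (2 * (n:ℝ) + 1 + (-1:ℝ)^(k+p)))^2)
      (Finset.Icc 1 n) := by
  intro j hj k hk he
  simp only [Finset.coe_Icc, Set.mem_Icc] at hj hk
  obtain ⟨hj1, hjn⟩ := hj
  obtain ⟨hk1, hkn⟩ := hk
  set αj := π * j / (2 * (n:ℝ) + 1 + (-1:ℝ)^(j+p)) with hαj
  set αk := π * k / (2 * (n:ℝ) + 1 + (-1:ℝ)^(k+p)) with hαk
  have hcj := cos_root_nonneg n p j hn hj1 hjn
  have hck := cos_root_nonneg n p k hn hk1 hkn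
  have hc : Real.cos αj = Real.cos αk := by
    simp only at he
    nlinarith [he, hcj, hck]
  obtain ⟨hj0, hj2⟩ := alpha_half n p j hn hj1 hjn
  obtain ⟨hk0, hk2⟩ := alpha_half n p k hn hk1 hkn
  have hπ := Real.pi_pos
  have hα : αj = αk := Real.injOn_cos ⟨by linarith, by linarith⟩ ⟨by linarith, by linarith⟩ hc
  -- turn into natural-number equation
  have hsj : (-1:ℝ)^(j+p) = 1 ∨ (-1:ℝ)^(j+p) = -1 := neg_one_pow_cases _
  have hsk : (-1:ℝ)^(k+p) = 1 ∨ (-1:ℝ)^(k+p) = -1 := neg_one_pow_cases _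
  set D : ℕ → ℕ := fun m => if Even (m+p) then 2*n+2 else 2*n with hD
  have hDval : ∀ m : ℕ, (2 * (n:ℝ) + 1 + (-1:ℝ)^(m+p)) = (D m : ℝ) := by
    intro m
    rcases Nat.even_or_odd (m+p) with h | h
    · rw [h.neg_one_pow, hD]; dsimp only; rw [if_pos h]; push_cast; ring
    · rw [h.neg_one_pow, hD]; dsimp only; rw [if_neg (Nat.not_even_iff_odd.mpr h)]
      push_cast; ring
  have hD0 : ∀ m : ℕ, 0 < D m := by
    intro m; rw [hD]; dsimp only; split <;> omega
  have hkey : j * D k = k * D j := by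
    have hDj0 : ((D j : ℝ)) ≠ 0 := by exact_mod_cast (hD0 j).ne'
    have hDk0 : ((D k : ℝ)) ≠ 0 := by exact_mod_cast (hD0 k).ne'
    rw [hαj, hαk, hDval j, hDval k, div_eq_div_iff (by positivity) (by positivity)] at hα
    have : (j:ℝ) * D k = (k:ℝ) * D j := by
      apply mul_left_cancel₀ (ne_of_gt Real.pi_pos)
      linear_combination hα
    exact_mod_cast this
  -- number theory
  have haux := root_inj_aux n hn
  rcases Nat.even_or_odd (j+p) with hje | hjo <;> rcases Nat.even_or_odd (k+p) with hke | hko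
  · -- both even: D j = D k = 2n+2
    have : D j = D k := by rw [hD]; simp [hje, hke]
    have hDk : 0 < D k := hD0 k
    rw [this] at hkey
    exact Nat.eq_of_mul_eq_mul_right hDk hkey
  · have hDj : D j = 2*n+2 := by rw [hD]; simp [hje]
    have hDk : D k = 2*n := by rw [hD]; simp [Nat.not_even_iff_odd.mpr hko]
    rw [hDj, hDk] at hkey
    exact absurd hkey (fun h => haux j k hj1 hjn hk1 hkn h)
  · have hDj : D j = 2*n := by rw [hD]; simp [Nat.not_even_iff_odd.mpr hjo]
    have hDk : D k = 2*n+2 := by rw [hD]; simp [hke]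
    rw [hDj, hDk] at hkey
    exact absurd hkey.symm (fun h => haux k j hk1 hkn hj1 hjn h)
  · have : D j = D k := by
      rw [hD]; simp [Nat.not_even_iff_odd.mpr hjo, Nat.not_even_iff_odd.mpr hko]
    have hDk : 0 < D k := hD0 k
    rw [this] at hkey
    exact Nat.eq_of_mul_eq_mul_right hDk hkey
theorem Z_plus_sign_factorization (n : ℕ) (hn : 1 ≤ n) (p : ℕ) (hp : p = 0 ∨ p = 1) :
    Z n + Polynomial.C ((-1 : ℝ) ^ p) =
      ∏ k ∈ Finset.Icc 1 n,
        (X - Polynomial.C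
          (4 * Real.cos (π * k / (2 * n + 1 + (-1 : ℝ) ^ (k + p))) ^ 2)) ∧
    (Z n + Polynomial.C ((-1 : ℝ) ^ p)).roots.card = n ∧
    ∀ x ∈ (Z n + Polynomial.C ((-1 : ℝ) ^ p)).roots, x ∈ Set.Ico (0 : ℝ) 4 := by
  classical
  obtain ⟨hZm, hZd⟩ := Z_monic_deg n
  set f : ℕ → ℝ := fun k => 4 * Real.cos (π * k / (2 * n + 1 + (-1 : ℝ) ^ (k + p)))^2
    with hf
  set P : ℝ[X] := Z n + C ((-1:ℝ)^p) with hP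
  have hCd : (C ((-1:ℝ)^p)).degree < (Z n).degree := by
    rw [hZd]
    refine lt_of_le_of_lt degree_C_le ?_
    exact_mod_cast hn
  have hPm : P.Monic := hZm.add_of_left hCd
  have hPd : P.degree = n := by rw [hP, degree_add_eq_left_of_degree_lt hCd, hZd]
  have hPnd : P.natDegree = n := natDegree_eq_of_degree_eq_some hPd
  have hP0 : P ≠ 0 := hPm.ne_zero
  have hroot : ∀ k ∈ Finset.Icc 1 n, P.eval (f k) = 0 := by
    intro k hk
    rw [Finset.mem_Icc] at hk
    rw [hP]
    simp only [eval_add, eval_C, hf]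
    rw [root_eval n p k hn hk.1 hk.2]
    ring
  have hinj : Set.InjOn f (Finset.Icc 1 n) := root_inj n p hn
  set s : Finset ℝ := (Finset.Icc 1 n).image f with hs
  have hscard : s.card = n := by
    rw [hs, Finset.card_image_of_injOn hinj, Nat.card_Icc]; omega
  have hsval : s.val = (Finset.Icc 1 n).val.map f := Finset.image_val_of_injOn hinj
  have hle : s.val ≤ P.roots := by
    rw [Multiset.le_iff_count]
    intro a
    by_cases ha : a ∈ s
    · have h1 : s.val.count a = 1 := Multiset.count_eq_one_of_mem s.nodup ha
      obtain ⟨k, hk, rfl⟩ := Finset.mem_image.mp ha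
      have hmem : f k ∈ P.roots := (mem_roots hP0).mpr (hroot k hk)
      rw [h1]
      exact Multiset.one_le_count_iff_mem.mpr hmem
    · rw [Multiset.count_eq_zero_of_notMem (by simpa using ha)]
      exact Nat.zero_le _
  have hcard' : P.roots.card ≤ n := hPnd ▸ P.card_roots'
  have hroots : P.roots = s.val := by
    have := Multiset.eq_of_le_of_card_le hle (by
      rw [show s.val.card = s.card from rfl, hscard]; exact hcard')
    exact this.symm
  have hrcard : P.roots.card = n := by
    rw [hroots, show s.val.card = s.card from rfl, hscard]
  have hsplits : P.Splits := by
    rw [splits_iff_card_roots, hrcard, hPnd]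
  have hfact := hsplits.eq_prod_roots_of_monic hPm
  refine ⟨?_, hrcard, ?_⟩
  · rw [hfact, hroots, hsval, Multiset.map_map, Finset.prod_eq_multiset_prod]
    rfl
  · intro x hx
    rw [hroots] at hx
    obtain ⟨k, hk, rfl⟩ := Finset.mem_image.mp (Finset.mem_def.mpr hx)
    rw [Finset.mem_Icc] at hk
    have h0 := cos_root_nonneg n p k hn hk.1 hk.2
    have h1 := cos_root_lt_one n p k hn hk.1 hk.2
    constructor
    · positivity
    · show f k < 4
      rw [hf]
      nlinarith [h0, h1]
end

section
/- Let i, j be integers with 0 < i < j − 1 and let f = Z_i · Z_j. All roots of f are real; let x₃ denote the third smallest element of the multiset of real roots of f (roots counted with multiplicity). Then |f(x)| < 1 for every real x with 0 < x ≤ x₃. -/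
open Polynomial Real

lemma C2 : (C (2:ℝ)) = 2 := map_ofNat C 2
lemma C1 : (C (1:ℝ)) = 1 := map_one C

lemma Z_cos (ψ : ℝ) : ∀ n : ℕ, Real.cos ψ * (Z n).eval (4 * Real.sin ψ ^ 2)
    = (-1)^n * Real.cos ((2*n+1)*ψ)
  | 0 => by simp [Z]
  | 1 => by
      simp only [Z, eval_sub, eval_X, eval_one, pow_one]
      have h3 : ((2*(1:ℕ)+1):ℝ)*ψ = 2*ψ + ψ := by push_cast; ring
      rw [h3, cos_add, cos_two_mul, sin_two_mul]
      linear_combination (2*Real.cos ψ) * (sin_sq_add_cos_sq ψ)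
  | (n+2) => by
      have h1 := Z_cos ψ (n+1)
      have h0 := Z_cos ψ n
      have hc2 : Real.cos (2*ψ) = 1 - 2 * Real.sin ψ ^ 2 := by
        rw [Real.cos_two_mul]; linear_combination (2:ℝ) * (sin_sq_add_cos_sq ψ)
      simp only [Z, eval_sub, eval_mul, eval_X, eval_ofNat] at *
      push_cast at h1 h0 ⊢
      have e2 : ((2*((n:ℝ)+2)+1))*ψ = ((2*((n:ℝ)+1)+1))*ψ + 2*ψ := by ring
      have e0 : ((2*(n:ℝ)+1))*ψ = ((2*((n:ℝ)+1)+1))*ψ - 2*ψ := by ring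
      rw [e2, cos_add]
      rw [e0, cos_sub] at h0
      rw [show ((-1:ℝ))^(n+1) = -(-1)^n by rw [pow_succ]; ring] at h1
      rw [show ((-1:ℝ))^(n+2) = (-1)^n by rw [pow_add]; norm_num]
      linear_combination (4*Real.sin ψ^2 - 2) * h1 - h0
        - ((-1:ℝ)^n) * Real.cos ((2*((n:ℝ)+1)+1)*ψ) * 2 * hc2

lemma Z_md : ∀ n : ℕ, (Z n).Monic ∧ (Z n).natDegree = n
  | 0 => ⟨monic_one, by simp [Z]⟩
  | 1 => by
      constructor
      · show (X - 1 : ℝ[X]).Monic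
        rw [← C1]; exact monic_X_sub_C 1
      · show (X - 1 : ℝ[X]).natDegree = 1
        rw [← C1]; exact natDegree_X_sub_C 1
  | (n+2) => by
      obtain ⟨m1, d1⟩ := Z_md (n+1)
      obtain ⟨m0, d0⟩ := Z_md n
      have mX : ((X:ℝ[X]) - 2).Monic := by rw [← C2]; exact monic_X_sub_C 2
      have mp : (((X:ℝ[X]) - 2) * Z (n+1)).Monic := mX.mul m1
      have dp : (((X:ℝ[X]) - 2) * Z (n+1)).natDegree = n + 2 := by
        rw [mX.natDegree_mul m1, d1, ← C2, natDegree_X_sub_C]; ring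
      have hdZ : (Z n).degree ≤ ((n:ℕ) : WithBot ℕ) := by
        exact le_trans (degree_le_natDegree (p := Z n)) (le_of_eq (by rw [d0]))
      have hlt : (Z n).degree < (((X:ℝ[X]) - 2) * Z (n+1)).degree := by
        rw [degree_eq_natDegree mp.ne_zero, dp]
        exact lt_of_le_of_lt hdZ (Nat.cast_lt.mpr (by omega))
      constructor
      · show (((X:ℝ[X]) - 2) * Z (n+1) - Z n).Monic
        unfold Monic
        rw [leadingCoeff_sub_of_degree_lt hlt]; exact mp
      · show (((X:ℝ[X]) - 2) * Z (n+1) - Z n).natDegree = n + 2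
        rw [natDegree_sub_eq_left_of_natDegree_lt ?_, dp]
        · rw [dp, d0]; omega

noncomputable def Zψ (n k : ℕ) : ℝ := (2*k+1)*π/(2*(2*n+1))
noncomputable def Zr (n k : ℕ) : ℝ := 4 * Real.sin (Zψ n k) ^ 2
noncomputable def M (n : ℕ) : Multiset ℝ := (Multiset.range n).map (Zr n)

lemma Zψ_pos (n k : ℕ) : 0 < Zψ n k := by
  unfold Zψ
  have := Real.pi_pos
  positivity

lemma Zψ_lt (n k : ℕ) (h : k < n) : Zψ n k < π/2 := by
  unfold Zψ
  rw [div_lt_div_iff₀ (by positivity) (by norm_num)]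
  have := Real.pi_pos
  have h1 : (2*(k:ℝ)+1) < 2*(n:ℝ)+1 := by
    have : (k:ℝ) < n := by exact_mod_cast h
    linarith
  nlinarith

lemma Zψ_mono (n k l : ℕ) (h : k < l) : Zψ n k < Zψ n l := by
  unfold Zψ
  have hd : (0:ℝ) < 2*(2*(n:ℝ)+1) := by positivity
  rw [div_lt_div_iff₀ hd hd]
  have hπ := Real.pi_pos
  have hkl : (k:ℝ) < l := by exact_mod_cast h
  have := mul_lt_mul_of_pos_right (show (2*(k:ℝ)+1)*π < (2*(l:ℝ)+1)*π by nlinarith) hd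
  linarith

lemma Zr_mono (n : ℕ) {k l : ℕ} (hk : l < n) (h : k < l) : Zr n k < Zr n l := by
  have h1 := Zψ_pos n k
  have h2 := Zψ_mono n k l h
  have h3 := Zψ_lt n l hk
  have s1 : 0 < Real.sin (Zψ n k) := Real.sin_pos_of_pos_of_lt_pi h1 (by linarith [Real.pi_pos])
  have s2 : Real.sin (Zψ n k) < Real.sin (Zψ n l) := by
    apply Real.strictMonoOn_sin (by constructor <;> [linarith; linarith])
      (by constructor <;> [linarith; linarith]) h2
  unfold Zr; nlinarith

lemma Z_root (n k : ℕ) (h : k < n) : (Z n).eval (Zr n k) = 0 := by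
  have hc := Z_cos (Zψ n k) n
  have harg : ((2*(n:ℝ)+1)) * Zψ n k = (k:ℝ)*π + π/2 := by
    unfold Zψ
    have : (2*(n:ℝ)+1) ≠ 0 := by positivity
    field_simp
  have hz : Real.cos ((2*(n:ℝ)+1) * Zψ n k) = 0 := by
    rw [harg, Real.cos_add, Real.cos_pi_div_two, Real.sin_pi_div_two]
    have : Real.sin ((k:ℝ)*π) = 0 := Real.sin_nat_mul_pi k
    simp [this]
  have hcosψ : 0 < Real.cos (Zψ n k) :=
    Real.cos_pos_of_mem_Ioo ⟨by linarith [Zψ_pos n k, Real.pi_pos], Zψ_lt n k h⟩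
  rw [hz] at hc
  have : Real.cos (Zψ n k) * (Z n).eval (Zr n k) = 0 := by
    unfold Zr; rw [hc]; ring
  rcases mul_eq_zero.mp this with h' | h'
  · exact absurd h' (ne_of_gt hcosψ)
  · exact h'

lemma M_card (n : ℕ) : Multiset.card (M n) = n := by simp [M]

lemma M_nodup (n : ℕ) : (M n).Nodup := by
  refine Multiset.Nodup.map_on ?_ (Multiset.nodup_range n)
  intro k hk l hl hkl
  rcases lt_trichotomy k l with h | h | h
  · exact absurd hkl (ne_of_lt (Zr_mono n (Multiset.mem_range.mp hl) h))
  · exact h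
  · exact absurd hkl.symm (ne_of_lt (Zr_mono n (Multiset.mem_range.mp hk) h))

lemma Z_eq_prod (n : ℕ) : Z n = ((M n).map fun t => X - C t).prod := by
  have Pm : (((M n).map fun t => X - C t).prod).Monic :=
    monic_multiset_prod_of_monic _ _ (fun t _ => monic_X_sub_C t)
  have Pd : (((M n).map fun t => X - C t).prod).natDegree = n := by
    rw [natDegree_multiset_prod_X_sub_C_eq_card, M_card]
  set P : ℝ[X] := ((M n).map fun t => X - C t).prod with hP
  obtain ⟨Zm, Zd⟩ := Z_md n
  by_contra hne
  have hD : Z n - P ≠ 0 := sub_ne_zero.mpr hne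
  have e1 : (Z n).degree = P.degree := by
    rw [degree_eq_natDegree Zm.ne_zero, degree_eq_natDegree Pm.ne_zero, Zd, Pd]
  have hdeg : (Z n - P).degree < (n : WithBot ℕ) := by
    have := degree_sub_lt e1 Zm.ne_zero (by rw [Zm.leadingCoeff, Pm.leadingCoeff])
    rwa [degree_eq_natDegree Zm.ne_zero, Zd] at this
  have hsub : M n ≤ (Z n - P).roots := by
    rw [Multiset.le_iff_subset (M_nodup n)]
    intro r hr
    rw [mem_roots hD]
    have hr2 : r ∈ (Multiset.range n).map (Zr n) := by simpa [M] using hr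
    obtain ⟨k, hk, rfl⟩ := Multiset.mem_map.mp hr2
    have hk' := Multiset.mem_range.mp hk
    have hPr : P.IsRoot (Zr n k) := by
      have : Zr n k ∈ P.roots := by
        rw [hP, roots_multiset_prod_X_sub_C]
        exact hr
      exact (mem_roots Pm.ne_zero).mp this
    have := Z_root n k hk'
    simp [IsRoot, eval_sub, this, hPr.eq_zero]
  have hcard : (n : WithBot ℕ) ≤ (Z n - P).degree := by
    calc (n : WithBot ℕ) = (Multiset.card (M n) : WithBot ℕ) := by rw [M_card]
      _ ≤ (Multiset.card (Z n - P).roots : WithBot ℕ) := by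
          exact_mod_cast Nat.cast_le.mpr (Multiset.card_le_card hsub)
      _ ≤ (Z n - P).degree := card_roots hD
  exact absurd (lt_of_le_of_lt hcard hdeg) (lt_irrefl _)

lemma Z_roots (n : ℕ) : (Z n).roots = M n := by
  conv_lhs => rw [Z_eq_prod n]
  exact roots_multiset_prod_X_sub_C (M n)

lemma Z_aeval_complex (n : ℕ) (z : ℂ) (h : (Polynomial.aeval z) (Z n) = 0) :
    ∃ t ∈ M n, z = (t:ℂ) := by
  rw [Z_eq_prod n] at h
  rw [map_multiset_prod (Polynomial.aeval (R := ℝ) z)] at h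
  rw [Multiset.map_map] at h
  rw [Multiset.prod_eq_zero_iff] at h
  obtain ⟨t, ht, h0⟩ := Multiset.mem_map.mp h
  refine ⟨t, ht, ?_⟩
  simp only [Function.comp_apply, map_sub, aeval_X, aeval_C] at h0
  have : z - (t:ℂ) = 0 := by simpa [Polynomial.algebraMap_eq] using h0
  linear_combination this

lemma key (a b ψ : ℝ) (ha : 3 ≤ a) (hab : a + 4 ≤ b) (hψ : 0 < ψ)
    (h : ψ ≤ π/(2*a) ∨ ψ ≤ 3*π/(2*b)) :
    |Real.cos (a*ψ) * Real.cos (b*ψ)| < Real.cos ψ ^ 2 := by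
  have hπ := Real.pi_pos
  have ha0 : (0:ℝ) < a := by linarith
  have hb0 : (0:ℝ) < b := by linarith
  by_cases hI : ψ ≤ π/(2*a)
  · -- Case I
    have haψ : a*ψ ≤ π/2 := by
      have h1 : a * ψ ≤ a * (π/(2*a)) := mul_le_mul_of_nonneg_left hI (le_of_lt ha0)
      have h2 : a * (π/(2*a)) = π/2 := by field_simp
      linarith
    have hψπ2 : ψ < π/2 := by
      have h6 : π/(2*a) ≤ π/6 := by gcongr <;> linarith
      linarith
    have hca : 0 ≤ Real.cos (a*ψ) :=
      Real.cos_nonneg_of_mem_Icc ⟨by nlinarith, haψ⟩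
    have h2a : Real.cos (a*ψ) ≤ Real.cos (2*ψ) :=
      Real.cos_le_cos_of_nonneg_of_le_pi (by linarith) (by linarith) (by nlinarith)
    have hc1 : Real.cos ψ < 1 := by
      have := Real.cos_lt_cos_of_nonneg_of_le_pi (le_refl 0) (by linarith) hψ
      simpa using this
    have hcpos : 0 < Real.cos ψ := Real.cos_pos_of_mem_Ioo ⟨by linarith, hψπ2⟩
    calc |Real.cos (a*ψ) * Real.cos (b*ψ)| ≤ |Real.cos (a*ψ)| := by
          rw [abs_mul]
          exact mul_le_of_le_one_right (abs_nonneg _) (Real.abs_cos_le_one _)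
      _ = Real.cos (a*ψ) := abs_of_nonneg hca
      _ ≤ Real.cos (2*ψ) := h2a
      _ < Real.cos ψ ^ 2 := by rw [Real.cos_two_mul]; nlinarith
  · -- Case II
    have hII : ψ ≤ 3*π/(2*b) := h.resolve_left hI
    have hb7 : (7:ℝ) ≤ b := by linarith
    have hbψ : b*ψ ≤ 3*π/2 := by
      have h1 : b * ψ ≤ b * (3*π/(2*b)) := mul_le_mul_of_nonneg_left hII (le_of_lt hb0)
      have h2 : b * (3*π/(2*b)) = 3*π/2 := by field_simp
      linarith
    have haψl : π/2 < a*ψ := by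
      have h1 : a * (π/(2*a)) < a * ψ := mul_lt_mul_of_pos_left (lt_of_not_ge hI) ha0
      have h2 : a * (π/(2*a)) = π/2 := by field_simp
      linarith
    have hgap : 4*ψ ≤ (b-a)*ψ := by nlinarith
    have haψu : a*ψ < 3*π/2 := by nlinarith
    have hbψl : π/2 < b*ψ := by nlinarith
    have hψs : ψ ≤ 3*π/14 := by
      have : 3*π/(2*b) ≤ 3*π/14 := by gcongr <;> linarith
      linarith
    set u := a*ψ - π with hu
    set v := b*ψ - π with hv
    have hu2 : |u| ≤ π/2 := abs_le.mpr ⟨by simp [hu]; linarith, by simp [hu]; linarith⟩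
    have hv2 : |v| ≤ π/2 := abs_le.mpr ⟨by simp [hv]; linarith, by simp [hv]; linarith⟩
    have hcu : 0 ≤ Real.cos u := Real.cos_nonneg_of_mem_Icc ⟨(abs_le.mp hu2).1, (abs_le.mp hu2).2⟩
    have hcv : 0 ≤ Real.cos v := Real.cos_nonneg_of_mem_Icc ⟨(abs_le.mp hv2).1, (abs_le.mp hv2).2⟩
    have habs_a : |Real.cos (a*ψ)| = Real.cos u := by
      have : a*ψ = u + π := by rw [hu]; ring
      rw [this, Real.cos_add_pi, abs_neg, abs_of_nonneg hcu]
    have habs_b : |Real.cos (b*ψ)| = Real.cos v := by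
      have : b*ψ = v + π := by rw [hv]; ring
      rw [this, Real.cos_add_pi, abs_neg, abs_of_nonneg hcv]
    have hvu : v - u = (b-a)*ψ := by rw [hu, hv]; ring
    have hvuπ : v - u ≤ π := by
      have := (abs_le.mp hu2).1
      have := (abs_le.mp hv2).2
      linarith
    have hcos_vu : Real.cos (v-u) ≤ Real.cos (4*ψ) :=
      Real.cos_le_cos_of_nonneg_of_le_pi (by linarith) hvuπ (by rw [hvu]; exact hgap)
    have hprod : Real.cos u * Real.cos v = (Real.cos (v-u) + Real.cos (u+v))/2 := by
      have hg : ∀ x y : ℝ, Real.cos x * Real.cos y = (Real.cos (y-x) + Real.cos (x+y))/2 := by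
        intro x y; rw [Real.cos_sub, Real.cos_add]; ring
      exact hg u v
    have hsq : (Real.cos (4*ψ) + 1)/2 = Real.cos (2*ψ)^2 := by
      have := Real.cos_sq (2*ψ)
      rw [this]; ring_nf
    have h2ψ : 2*ψ < π/2 := by nlinarith
    have hc2ψ : 0 ≤ Real.cos (2*ψ) := Real.cos_nonneg_of_mem_Icc ⟨by linarith, by linarith⟩
    have hclt : Real.cos (2*ψ) < Real.cos ψ :=
      Real.cos_lt_cos_of_nonneg_of_le_pi (le_of_lt hψ) (by linarith) (by linarith)
    calc |Real.cos (a*ψ) * Real.cos (b*ψ)| = Real.cos u * Real.cos v := by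
          rw [abs_mul, habs_a, habs_b]
      _ ≤ (Real.cos (v-u) + 1)/2 := by
          rw [hprod]
          have := Real.cos_le_one (u+v)
          linarith
      _ ≤ (Real.cos (4*ψ) + 1)/2 := by linarith
      _ = Real.cos (2*ψ)^2 := hsq
      _ < Real.cos ψ ^ 2 := by
          apply pow_lt_pow_left₀ hclt hc2ψ
          norm_num

lemma third_le {u : ℝ} : ∀ (l : List ℝ), l.Pairwise (· ≤ ·) →
    3 ≤ l.countP (fun y => decide (y ≤ u)) → l.getD 2 0 ≤ u := by
  intro l hs hc
  match l with
  | [] => simp [List.countP, List.countP.go] at hc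
  | [a] =>
    have h2 : List.countP (fun y => decide (y ≤ u)) [a] ≤ 1 := by
      simpa using List.countP_le_length (p := fun y => decide (y ≤ u)) (l := [a])
    omega
  | [a, b] =>
    have h2 : List.countP (fun y => decide (y ≤ u)) [a, b] ≤ 2 := by
      simpa using List.countP_le_length (p := fun y => decide (y ≤ u)) (l := [a, b])
    omega
  | a :: b :: c :: t =>
    show c ≤ u
    by_contra hcu
    push_neg at hcu
    have hst : (c :: t).Pairwise (· ≤ ·) := hs.tail.tail
    have hall : ∀ y ∈ c :: t, ¬ (y ≤ u) := by
      intro y hy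
      rcases List.mem_cons.mp hy with rfl | hy'
      · linarith
      · have : c ≤ y := (List.pairwise_cons.mp hst).1 y hy'
        linarith
    have h0 : (c :: t).countP (fun y => decide (y ≤ u)) = 0 :=
      List.countP_eq_zero.mpr (by intro y hy; simpa using hall y hy)
    have hsplit : (a :: b :: c :: t).countP (fun y => decide (y ≤ u))
        = ([a, b]).countP (fun y => decide (y ≤ u)) + (c :: t).countP (fun y => decide (y ≤ u)) := by
      rw [← List.countP_append]
      rfl
    have h2 : List.countP (fun y => decide (y ≤ u)) [a, b] ≤ 2 := by
      simpa using List.countP_le_length (p := fun y => decide (y ≤ u)) (l := [a, b])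
    rw [hsplit, h0] at hc
    omega

theorem abs_ZZ_lt_one_up_to_third_root (i j : ℕ) (hi : 0 < i) (hij : i + 1 < j) :
    -- all complex roots of `Z i * Z j` are real
    (∀ z : ℂ, (Polynomial.aeval z) (Z i * Z j) = 0 → z.im = 0) ∧
    -- `|f x| < 1` for `0 < x ≤ x₃`, where `x₃` is the third smallest real root
    -- (roots counted with multiplicity, sorted in nondecreasing order)
    ∀ x : ℝ, 0 < x →
      x ≤ (((Z i * Z j).roots.sort (· ≤ ·)).getD 2 0) →
      |(Z i * Z j).eval x| < 1 := by
  have hπ := Real.pi_pos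
  obtain ⟨Zmi, _⟩ := Z_md i
  obtain ⟨Zmj, _⟩ := Z_md j
  have hf0 : Z i * Z j ≠ 0 := (Zmi.mul Zmj).ne_zero
  constructor
  · intro z hz
    rw [map_mul] at hz
    rcases mul_eq_zero.mp hz with h | h
    · obtain ⟨t, _, hzt⟩ := Z_aeval_complex i z h
      rw [hzt]; exact Complex.ofReal_im t
    · obtain ⟨t, _, hzt⟩ := Z_aeval_complex j z h
      rw [hzt]; exact Complex.ofReal_im t
  · intro x hx hx3
    set A : ℝ := 2*(i:ℝ)+1 with hA
    set B : ℝ := 2*(j:ℝ)+1 with hB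
    have hi1 : (1:ℝ) ≤ (i:ℝ) := by exact_mod_cast hi
    have hij' : (i:ℝ) + 2 ≤ (j:ℝ) := by exact_mod_cast hij
    have hA3 : 3 ≤ A := by rw [hA]; linarith
    have hAB : A + 4 ≤ B := by rw [hA, hB]; linarith
    have hB7 : (7:ℝ) ≤ B := by linarith
    set Ψ : ℝ := max (3*π/(2*B)) (π/(2*A)) with hΨ
    have hΨpos : 0 < Ψ := lt_max_of_lt_left (by positivity)
    have hΨlt : Ψ < π/2 := by
      apply max_lt
      · have : 3*π/(2*B) ≤ 3*π/14 := by gcongr <;> linarith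
        linarith
      · have : π/(2*A) ≤ π/6 := by gcongr <;> linarith
        linarith
    set u : ℝ := 4 * Real.sin Ψ ^ 2 with hu
    have hsinΨ : 0 < Real.sin Ψ := Real.sin_pos_of_pos_of_lt_pi hΨpos (by linarith)
    -- bound lemma
    have bound : ∀ ψ' : ℝ, 0 ≤ ψ' → ψ' ≤ Ψ → 4 * Real.sin ψ' ^ 2 ≤ u := by
      intro ψ' h0 h1
      have hm : Real.sin ψ' ≤ Real.sin Ψ := by
        apply Real.strictMonoOn_sin.monotoneOn ⟨by linarith, by linarith⟩
          ⟨by linarith, by linarith⟩ h1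
      have hn : 0 ≤ Real.sin ψ' := Real.sin_nonneg_of_nonneg_of_le_pi h0 (by linarith)
      rw [hu]; nlinarith
    -- the three roots
    have hψi0 : Zψ i 0 = π/(2*A) := by unfold Zψ; rw [hA]; push_cast; ring
    have hψj0 : Zψ j 0 = π/(2*B) := by unfold Zψ; rw [hB]; push_cast; ring
    have hψj1 : Zψ j 1 = 3*π/(2*B) := by unfold Zψ; rw [hB]; push_cast; ring
    have hri0 : Zr i 0 ≤ u := by
      apply bound _ (le_of_lt (Zψ_pos i 0))
      rw [hψi0]; exact le_max_right _ _
    have hrj0 : Zr j 0 ≤ u := by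
      apply bound _ (le_of_lt (Zψ_pos j 0))
      rw [hψj0]
      refine le_trans ?_ (le_max_left _ _)
      gcongr <;> linarith
    have hrj1 : Zr j 1 ≤ u := by
      apply bound _ (le_of_lt (Zψ_pos j 1))
      rw [hψj1]; exact le_max_left _ _
    have hmemi : Zr i 0 ∈ M i := Multiset.mem_map.mpr ⟨0, Multiset.mem_range.mpr hi, rfl⟩
    have hpairne : Zr j 0 ≠ Zr j 1 := ne_of_lt (Zr_mono j (by omega) (by norm_num))
    have hpair : ({Zr j 0, Zr j 1} : Multiset ℝ) ≤ M j := by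
      rw [Multiset.le_iff_subset (by simp [hpairne])]
      intro r hr
      rcases Multiset.mem_cons.mp hr with rfl | hr'
      · exact Multiset.mem_map.mpr ⟨0, Multiset.mem_range.mpr (by omega), rfl⟩
      · rw [Multiset.mem_singleton.mp hr']
        exact Multiset.mem_map.mpr ⟨1, Multiset.mem_range.mpr (by omega), rfl⟩
    have hroots : (Z i * Z j).roots = M i + M j := by
      rw [roots_mul hf0, Z_roots, Z_roots]
    have ht3 : ({Zr i 0} : Multiset ℝ) + {Zr j 0, Zr j 1} ≤ (Z i * Z j).roots := by
      rw [hroots]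
      exact add_le_add (Multiset.singleton_le.mpr hmemi) hpair
    -- third root bound
    have hx3u : (((Z i * Z j).roots.sort (· ≤ ·)).getD 2 0) ≤ u := by
      apply third_le _ (Multiset.pairwise_sort _ _)
      have hcount : Multiset.countP (fun y => y ≤ u) ((Z i * Z j).roots) ≥ 3 := by
        have h1 : Multiset.filter (fun y => y ≤ u) (({Zr i 0} : Multiset ℝ) + {Zr j 0, Zr j 1})
            ≤ Multiset.filter (fun y => y ≤ u) ((Z i * Z j).roots) :=
          Multiset.filter_le_filter _ ht3
        have h2 : Multiset.filter (fun y => y ≤ u) (({Zr i 0} : Multiset ℝ) + {Zr j 0, Zr j 1})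
            = ({Zr i 0} : Multiset ℝ) + {Zr j 0, Zr j 1} := by
          rw [Multiset.filter_eq_self]
          intro r hr
          rcases Multiset.mem_add.mp hr with hr' | hr'
          · rw [Multiset.mem_singleton.mp hr']; exact hri0
          · rcases Multiset.mem_cons.mp hr' with rfl | hr''
            · exact hrj0
            · rw [Multiset.mem_singleton.mp hr'']; exact hrj1
        have h3 := Multiset.card_le_card h1
        rw [h2] at h3
        simp only [Multiset.countP_eq_card_filter]
        simpa using h3
      have : (((Z i * Z j).roots.sort (· ≤ ·)) : Multiset ℝ) = (Z i * Z j).roots :=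
        Multiset.sort_eq _ _
      calc (3:ℕ) ≤ Multiset.countP (fun y => y ≤ u) ((Z i * Z j).roots) := hcount
        _ = Multiset.countP (fun y => y ≤ u) ((((Z i * Z j).roots.sort (· ≤ ·)) : Multiset ℝ)) := by rw [this]
        _ = List.countP (fun y => decide (y ≤ u)) ((Z i * Z j).roots.sort (· ≤ ·)) :=
            Multiset.coe_countP _ _
    have hxu : x ≤ u := le_trans hx3 hx3u
    -- set up ψ
    set ψ : ℝ := Real.arcsin (Real.sqrt x / 2) with hψdef
    have hsqx : 0 < Real.sqrt x := Real.sqrt_pos.mpr hx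
    have harg1 : Real.sqrt x / 2 ≤ Real.sin Ψ := by
      have h1 : Real.sqrt x ≤ Real.sqrt (4 * Real.sin Ψ ^ 2) := Real.sqrt_le_sqrt (by rw [← hu]; exact hxu)
      have h2 : Real.sqrt (4 * Real.sin Ψ ^ 2) = 2 * Real.sin Ψ := by
        rw [show 4 * Real.sin Ψ ^ 2 = (2 * Real.sin Ψ)^2 by ring]
        exact Real.sqrt_sq (by positivity)
      rw [h2] at h1
      linarith
    have hψpos : 0 < ψ := Real.arcsin_pos.mpr (by positivity)
    have harg2 : Real.sqrt x / 2 ≤ 1 := le_trans harg1 (Real.sin_le_one Ψ)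
    have hψΨ : ψ ≤ Ψ := by
      have h1 : Real.arcsin (Real.sqrt x / 2) ≤ Real.arcsin (Real.sin Ψ) :=
        Real.monotone_arcsin harg1
      rwa [Real.arcsin_sin (by linarith) (by linarith)] at h1
    have hsin : Real.sin ψ = Real.sqrt x / 2 := Real.sin_arcsin (by linarith [Real.sqrt_nonneg x]) harg2
    have hxeq : 4 * Real.sin ψ ^ 2 = x := by
      rw [hsin, div_pow, Real.sq_sqrt hx.le]; ring
    have hcψ : 0 < Real.cos ψ := Real.cos_pos_of_mem_Ioo ⟨by linarith, by linarith⟩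
    -- key inequality
    have hkey : |Real.cos (A*ψ) * Real.cos (B*ψ)| < Real.cos ψ ^ 2 := by
      apply key A B ψ hA3 hAB hψpos
      rcases le_max_iff.mp hψΨ with h | h
      · right; exact h
      · left; exact h
    -- evaluate
    have hEi := Z_cos ψ i
    have hEj := Z_cos ψ j
    rw [hxeq] at hEi hEj
    have hEi' : Real.cos ψ * (Z i).eval x = (-1)^i * Real.cos (A*ψ) := by
      rw [hEi, hA]
    have hEj' : Real.cos ψ * (Z j).eval x = (-1)^j * Real.cos (B*ψ) := by
      rw [hEj, hB]
    have gi : Real.cos ψ * |(Z i).eval x| = |Real.cos (A*ψ)| := by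
      rw [show Real.cos ψ * |(Z i).eval x| = |Real.cos ψ * (Z i).eval x| by
        rw [abs_mul, abs_of_pos hcψ]]
      rw [hEi', abs_mul]
      simp
    have gj : Real.cos ψ * |(Z j).eval x| = |Real.cos (B*ψ)| := by
      rw [show Real.cos ψ * |(Z j).eval x| = |Real.cos ψ * (Z j).eval x| by
        rw [abs_mul, abs_of_pos hcψ]]
      rw [hEj', abs_mul]
      simp
    have hmain : Real.cos ψ ^ 2 * |(Z i * Z j).eval x| = |Real.cos (A*ψ)| * |Real.cos (B*ψ)| := by
      rw [eval_mul, abs_mul, ← gi, ← gj]; ring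
    have hlt : Real.cos ψ ^ 2 * |(Z i * Z j).eval x| < Real.cos ψ ^ 2 * 1 := by
      rw [hmain, ← abs_mul, mul_one]
      exact hkey
    exact lt_of_mul_lt_mul_left hlt (by positivity)
end
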